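/- Let F₀ = {i_{nm} : B_n → B_m : n ≤ m < ω} be a complete iteration system such that B₀ contains a strictly decreasing sequence ⟨a_n : n < ω⟩ with ⋀_{n<ω} a_n = 0, and such that for every n ≥ 1 there exists d_n ∈ B_n with π_{n-1,n}(d_n) = π_{n-1,n}(¬d_n) = 1. Then there exist threads f, g ∈ T(F₀) which are incompatible in T(F₀) (no nonzero thread h satisfies h ≤ f and h ≤ g) but such that f(n) ∧ g(n) > 0 in B_n for every n < ω. -/
import Mathlib


/-- A complete iteration system of complete Boolean algebras indexed by `ι`:
regular embeddings `emb : B a → B b` for `a ≤ b` (injective Boolean algebra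
homomorphisms preserving arbitrary suprema) which commute and are the identity
on the diagonal. -/
structure IterSys (ι : Type*) [Preorder ι] where
  B : ι → Type*
  cba : ∀ a, CompleteBooleanAlgebra (B a)
  emb : ∀ {a b : ι}, a ≤ b → B a → B b
  emb_refl : ∀ (a : ι) (x : B a), emb (le_refl a) x = x
  emb_trans : ∀ {a b c : ι} (hab : a ≤ b) (hbc : b ≤ c) (x : B a),
    emb hbc (emb hab x) = emb (hab.trans hbc) x
  emb_inj : ∀ {a b : ι} (h : a ≤ b), Function.Injective (emb h)
  emb_sSup : ∀ {a b : ι} (h : a ≤ b) (S : Set (B a)), emb h (sSup S) = sSup (emb h '' S)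
  emb_inf : ∀ {a b : ι} (h : a ≤ b) (x y : B a), emb h (x ⊓ y) = emb h x ⊓ emb h y
  emb_compl : ∀ {a b : ι} (h : a ≤ b) (x : B a), emb h xᶜ = (emb h x)ᶜ
  emb_top : ∀ {a b : ι} (h : a ≤ b), emb h (⊤ : B a) = (⊤ : B b)

attribute [instance] IterSys.cba

namespace IterSys

variable {ι : Type*} [Preorder ι] (F : IterSys ι)

/-- The retraction `π_{a b}` associated to the regular embedding `i_{a b}`. -/
def ret {a b : ι} (h : a ≤ b) (c : F.B b) : F.B a :=
  sInf {x : F.B a | c ≤ F.emb h x}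

/-- A thread of the iteration system (an element of the inverse limit `T(F)`). -/
def IsThread (f : ∀ a, F.B a) : Prop :=
  ∀ {a b : ι} (h : a ≤ b), F.ret h (f b) = f a

/-- A constant thread (an element of the direct limit `C(F)`). -/
def IsConstThread (f : ∀ a, F.B a) : Prop :=
  F.IsThread f ∧ ∃ a : ι, ∀ (b : ι) (h : a ≤ b), f b = F.emb h (f a)

/-- The pointwise order on threads. -/
def ThreadLE (f g : ∀ a, F.B a) : Prop := ∀ a, f a ≤ g a

/-- A thread is nonzero if some (equivalently, cofinally many) of its coordinates
are nonzero. -/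
def NonzeroThread (f : ∀ a, F.B a) : Prop := ∃ a, f a ≠ ⊥

/-- Two threads are compatible in `T(F)` if some nonzero thread lies below both. -/
def Compat (f g : ∀ a, F.B a) : Prop :=
  ∃ h, F.IsThread h ∧ F.NonzeroThread h ∧ F.ThreadLE h f ∧ F.ThreadLE h g

/-- Two constant threads are compatible in `C(F)` if some nonzero constant thread
lies below both. -/
def ConstCompat (f g : ∀ a, F.B a) : Prop :=
  ∃ h, F.IsConstThread h ∧ F.NonzeroThread h ∧ F.ThreadLE h f ∧ F.ThreadLE h g

end IterSys

namespace IterSys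

section Gen

variable {ι : Type*} [Preorder ι] (F : IterSys ι)

lemma emb_sup {a b : ι} (h : a ≤ b) (x y : F.B a) :
    F.emb h (x ⊔ y) = F.emb h x ⊔ F.emb h y := by
  have h1 : x ⊔ y = (xᶜ ⊓ yᶜ)ᶜ := by simp
  rw [h1, F.emb_compl, F.emb_inf, F.emb_compl, F.emb_compl, compl_inf, compl_compl, compl_compl]

lemma emb_bot {a b : ι} (h : a ≤ b) : F.emb h (⊥ : F.B a) = ⊥ := by
  have h1 : (⊥ : F.B a) = ⊤ᶜ := by simp
  rw [h1, F.emb_compl, F.emb_top, compl_top]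

lemma emb_mono {a b : ι} (h : a ≤ b) : Monotone (F.emb h) := by
  intro x y hxy
  calc F.emb h x = F.emb h (x ⊓ y) := by rw [inf_eq_left.mpr hxy]
    _ = F.emb h x ⊓ F.emb h y := F.emb_inf h x y
    _ ≤ F.emb h y := inf_le_right

lemma emb_le_iff {a b : ι} (h : a ≤ b) {x y : F.B a} :
    F.emb h x ≤ F.emb h y ↔ x ≤ y := by
  refine ⟨fun hxy => ?_, fun hxy => F.emb_mono h hxy⟩
  have h1 : F.emb h (x ⊓ y) = F.emb h x := by
    rw [F.emb_inf, inf_eq_left.mpr hxy]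
  exact inf_eq_left.mp (F.emb_inj h h1)

lemma emb_sInf {a b : ι} (h : a ≤ b) (S : Set (F.B a)) :
    F.emb h (sInf S) = sInf (F.emb h '' S) := by
  have h2 : sInf S = (sSup (compl '' S))ᶜ := by
    rw [sSup_image]; simp [sInf_eq_iInf, compl_iSup]
  have h3 : sInf (F.emb h '' S) = (sSup (compl '' (F.emb h '' S)))ᶜ := by
    rw [sSup_image]; simp [sInf_eq_iInf, compl_iSup]
  rw [h2, F.emb_compl, F.emb_sSup, h3]
  congr 2
  rw [Set.image_image, Set.image_image]
  exact Set.image_congr fun x _ => F.emb_compl h x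

lemma gc {a b : ι} (h : a ≤ b) : GaloisConnection (F.ret h) (F.emb h) := by
  intro c x
  constructor
  · intro hcx
    have h1 : c ≤ F.emb h (F.ret h c) := by
      rw [ret, F.emb_sInf]
      refine le_sInf ?_
      rintro y ⟨z, hz, rfl⟩
      exact hz
    exact h1.trans (F.emb_mono h hcx)
  · intro hcx
    exact sInf_le hcx

lemma ret_emb {a b : ι} (h : a ≤ b) (x : F.B a) : F.ret h (F.emb h x) = x := by
  refine le_antisymm ((F.gc h).l_le le_rfl) ?_
  rw [← F.emb_le_iff h]
  exact (F.gc h).le_u_l (F.emb h x)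

lemma ret_id {a : ι} (x : F.B a) : F.ret (le_refl a) x = x := by
  refine le_antisymm ((F.gc (le_refl a)).l_le (by rw [F.emb_refl])) ?_
  have h1 := (F.gc (le_refl a)).le_u_l x
  rwa [F.emb_refl] at h1

lemma ret_ret {a b c : ι} (hab : a ≤ b) (hbc : b ≤ c) (x : F.B c) :
    F.ret hab (F.ret hbc x) = F.ret (hab.trans hbc) x := by
  apply le_antisymm
  · refine (F.gc hab).l_le ((F.gc hbc).l_le ?_)
    rw [F.emb_trans]
    exact (F.gc (hab.trans hbc)).le_u_l x
  · refine (F.gc (hab.trans hbc)).l_le ?_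
    rw [← F.emb_trans hab hbc]
    exact ((F.gc hbc).le_u_l x).trans (F.emb_mono hbc ((F.gc hab).le_u_l _))

lemma emb_himp {a b : ι} (h : a ≤ b) (x y : F.B a) :
    F.emb h (x ⇨ y) = F.emb h x ⇨ F.emb h y := by
  rw [himp_eq, himp_eq, F.emb_sup, F.emb_compl]

lemma ret_emb_inf {a b : ι} (h : a ≤ b) (x : F.B a) (c : F.B b) :
    F.ret h (F.emb h x ⊓ c) = x ⊓ F.ret h c := by
  refine eq_of_forall_ge_iff fun y => ?_
  rw [F.gc h, inf_comm, ← le_himp_iff, ← F.emb_himp, ← F.gc h, le_himp_iff, inf_comm]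

lemma ret_bot {a b : ι} (h : a ≤ b) : F.ret h (⊥ : F.B b) = ⊥ :=
  (F.gc h).l_bot

end Gen

section NatSys

variable (F : IterSys ℕ) (d d' : ∀ n, F.B (n + 1)) (A aa : ℕ → F.B 0)

/-- Auxiliary terms of the threads. -/
def auxT (n k : ℕ) : F.B n :=
  if h : k + 1 ≤ n then F.emb (Nat.zero_le n) (A k) ⊓ F.emb h (d k) else ⊥

/-- The thread. -/
def auxF (n : ℕ) : F.B n :=
  F.emb (Nat.zero_le n) (aa n) ⊔ ⨆ k, F.auxT d A n k

lemma ret_auxT (hd : ∀ k, F.ret (Nat.le_succ k) (d k) = ⊤) (n k : ℕ) :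
    F.ret (Nat.le_succ n) (F.auxT d A (n + 1) k)
      = F.auxT d A n k ⊔ (if k = n then F.emb (Nat.zero_le n) (A n) else ⊥) := by
  unfold auxT
  by_cases h1 : k + 1 ≤ n
  · have h2 : k + 1 ≤ n + 1 := h1.trans (Nat.le_succ n)
    have h3 : k ≠ n := by omega
    rw [dif_pos h2, dif_pos h1, if_neg h3, sup_bot_eq]
    have e1 : F.emb (Nat.zero_le (n+1)) (A k)
        = F.emb (Nat.le_succ n) (F.emb (Nat.zero_le n) (A k)) := (F.emb_trans _ _ _).symm
    have e2 : F.emb h2 (d k) = F.emb (Nat.le_succ n) (F.emb h1 (d k)) := (F.emb_trans _ _ _).symm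
    rw [e1, e2, ← F.emb_inf, F.ret_emb]
  · by_cases h4 : k = n
    · subst h4
      have h5 : ¬ (k + 1 ≤ k) := by omega
      rw [dif_pos (le_refl (k+1)), dif_neg h5, if_pos rfl, bot_sup_eq]
      have e1 : F.emb (Nat.zero_le (k+1)) (A k)
          = F.emb (Nat.le_succ k) (F.emb (Nat.zero_le k) (A k)) := (F.emb_trans _ _ _).symm
      rw [F.emb_refl, e1, F.ret_emb_inf, hd k, inf_top_eq]
    · have h5 : ¬ (k + 1 ≤ n + 1) := by omega
      rw [dif_neg h5, dif_neg h1, if_neg h4, sup_bot_eq, F.ret_bot]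

lemma ret_auxF (hd : ∀ k, F.ret (Nat.le_succ k) (d k) = ⊤)
    (haa : ∀ n, aa (n + 1) ⊔ A n = aa n) (n : ℕ) :
    F.ret (Nat.le_succ n) (F.auxF d A aa (n + 1)) = F.auxF d A aa n := by
  unfold auxF
  rw [(F.gc (Nat.le_succ n)).l_sup, (F.gc (Nat.le_succ n)).l_iSup]
  have e0 : F.emb (Nat.zero_le (n+1)) (aa (n+1))
      = F.emb (Nat.le_succ n) (F.emb (Nat.zero_le n) (aa (n+1))) := (F.emb_trans _ _ _).symm
  rw [e0, F.ret_emb]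
  have e1 : ∀ k, F.ret (Nat.le_succ n) (F.auxT d A (n+1) k)
      = F.auxT d A n k ⊔ (if k = n then F.emb (Nat.zero_le n) (A n) else ⊥) :=
    F.ret_auxT d A hd n
  simp only [e1]
  rw [iSup_sup_eq]
  have e2 : (⨆ k, (if k = n then F.emb (Nat.zero_le n) (A n) else (⊥ : F.B n)))
      = F.emb (Nat.zero_le n) (A n) := by
    apply le_antisymm
    · exact iSup_le fun k => by split_ifs <;> simp
    · have h6 := le_iSup (fun k => (if k = n then F.emb (Nat.zero_le n) (A n) else (⊥ : F.B n))) n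
      simpa using h6
  rw [e2]
  have e3 : F.emb (Nat.zero_le n) (aa (n+1)) ⊔ F.emb (Nat.zero_le n) (A n)
      = F.emb (Nat.zero_le n) (aa n) := by
    rw [← F.emb_sup, haa n]
  rw [← e3]
  simp only [sup_assoc, sup_comm, sup_left_comm]

lemma isThread_of_succ (x : ∀ n, F.B n)
    (hx : ∀ n, F.ret (Nat.le_succ n) (x (n + 1)) = x n) : F.IsThread x := by
  intro m n h
  induction n, h using Nat.le_induction with
  | base => exact F.ret_id (x m)
  | succ n hmn ih =>
    rw [← F.ret_ret hmn (Nat.le_succ n), hx n, ih]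

lemma auxT_inf_auxT (hA : ∀ k j : ℕ, k ≠ j → A k ⊓ A j = ⊥)
    (hdd : ∀ k, d k ⊓ d' k = ⊥) (n k j : ℕ) :
    F.auxT d A n k ⊓ F.auxT d' A n j = ⊥ := by
  unfold auxT
  by_cases h1 : k + 1 ≤ n
  · by_cases h2 : j + 1 ≤ n
    · rw [dif_pos h1, dif_pos h2]
      by_cases h3 : k = j
      · subst h3
        refine le_bot_iff.mp ?_
        calc (F.emb (Nat.zero_le n) (A k) ⊓ F.emb h1 (d k))
              ⊓ (F.emb (Nat.zero_le n) (A k) ⊓ F.emb h2 (d' k))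
            ≤ F.emb h1 (d k) ⊓ F.emb h1 (d' k) := inf_le_inf inf_le_right inf_le_right
          _ = F.emb h1 (d k ⊓ d' k) := (F.emb_inf h1 _ _).symm
          _ = ⊥ := by rw [hdd k, F.emb_bot]
      · refine le_bot_iff.mp ?_
        calc (F.emb (Nat.zero_le n) (A k) ⊓ F.emb h1 (d k))
              ⊓ (F.emb (Nat.zero_le n) (A j) ⊓ F.emb h2 (d' j))
            ≤ F.emb (Nat.zero_le n) (A k) ⊓ F.emb (Nat.zero_le n) (A j) :=
              inf_le_inf inf_le_left inf_le_left
          _ = F.emb (Nat.zero_le n) (A k ⊓ A j) := (F.emb_inf _ _ _).symm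
          _ = ⊥ := by rw [hA k j h3, F.emb_bot]
    · rw [dif_neg h2, inf_bot_eq]
  · rw [dif_neg h1, bot_inf_eq]

lemma auxF_inf_auxF (hA : ∀ k j : ℕ, k ≠ j → A k ⊓ A j = ⊥)
    (hdd : ∀ k, d k ⊓ d' k = ⊥) (n : ℕ) :
    F.auxF d A aa n ⊓ F.auxF d' A aa n = F.emb (Nat.zero_le n) (aa n) := by
  unfold auxF
  rw [← sup_inf_left]
  have e1 : (⨆ k, F.auxT d A n k) ⊓ (⨆ k, F.auxT d' A n k) = ⊥ := by
    rw [iSup_inf_eq]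
    simp only [inf_iSup_eq]
    simp [F.auxT_inf_auxT d d' A hA hdd n]
  rw [e1, sup_bot_eq]

end NatSys

end IterSys

/-- Let `F₀` be a complete iteration system of length `ω` such that
`B 0` contains a strictly decreasing sequence `⟨a n⟩` with `⨅ n, a n = ⊥`, and such
that for every `n` there is `d ∈ B (n+1)` with `π_{n,n+1}(d) = π_{n,n+1}(dᶜ) = ⊤`.
Then there are threads `f, g ∈ T(F₀)` which are incompatible in `T(F₀)` but such that
`f n ⊓ g n > ⊥` in `B n` for every `n`. -/
theorem stmt12 (F : IterSys ℕ)
    (a : ℕ → F.B 0) (hdec : ∀ n : ℕ, a (n + 1) < a n) (hbot : (⨅ n : ℕ, a n) = ⊥)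
    (hgen : ∀ n : ℕ, ∃ d : F.B (n + 1),
      F.ret (Nat.le_succ n) d = ⊤ ∧ F.ret (Nat.le_succ n) dᶜ = ⊤) :
    ∃ f g : ∀ n, F.B n, F.IsThread f ∧ F.IsThread g ∧
      ¬ F.Compat f g ∧ ∀ n : ℕ, f n ⊓ g n ≠ ⊥ := by
  classical
  choose d hd1 hd2 using hgen
  set A : ℕ → F.B 0 := fun k => a k ⊓ (a (k + 1))ᶜ with hAdef
  have hanti : Antitone a := (strictAnti_nat_of_succ_lt hdec).antitone
  have haa : ∀ n, a (n + 1) ⊔ A n = a n := by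
    intro n
    rw [hAdef, sup_inf_left, sup_compl_eq_top, inf_top_eq, sup_eq_right.mpr (hdec n).le]
  have hA : ∀ k j : ℕ, k ≠ j → A k ⊓ A j = ⊥ := by
    have key : ∀ k j : ℕ, k < j → A k ⊓ A j = ⊥ := by
      intro k j hkj
      refine le_bot_iff.mp ?_
      calc A k ⊓ A j ≤ (a (k + 1))ᶜ ⊓ a j := inf_le_inf inf_le_right inf_le_left
        _ ≤ (a (k + 1))ᶜ ⊓ a (k + 1) := inf_le_inf le_rfl (hanti (by omega))
        _ = ⊥ := compl_inf_eq_bot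
    intro k j hkj
    rcases lt_or_gt_of_ne hkj with h | h
    · exact key k j h
    · rw [inf_comm]; exact key j k h
  have hdd : ∀ k, d k ⊓ (fun k => (d k)ᶜ) k = ⊥ := fun k => inf_compl_eq_bot
  have hd2' : ∀ k, F.ret (Nat.le_succ k) ((fun k => (d k)ᶜ) k) = ⊤ := fun k => hd2 k
  refine ⟨F.auxF d A a, F.auxF (fun k => (d k)ᶜ) A a, ?_, ?_, ?_, ?_⟩
  · exact F.isThread_of_succ _ (F.ret_auxF d A a hd1 haa)
  · exact F.isThread_of_succ _ (F.ret_auxF (fun k => (d k)ᶜ) A a hd2' haa)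
  · rintro ⟨h, hth, ⟨n0, hn0⟩, hhf, hhg⟩
    have hfg : ∀ n, F.auxF d A a n ⊓ F.auxF (fun k => (d k)ᶜ) A a n
        = F.emb (Nat.zero_le n) (a n) := F.auxF_inf_auxF d _ A a hA hdd
    have h0le : ∀ n, h 0 ≤ a n := by
      intro n
      have e1 : h n ≤ F.emb (Nat.zero_le n) (a n) :=
        (le_inf (hhf n) (hhg n)).trans (le_of_eq (hfg n))
      calc h 0 = F.ret (Nat.zero_le n) (h n) := (hth (Nat.zero_le n)).symm
        _ ≤ F.ret (Nat.zero_le n) (F.emb (Nat.zero_le n) (a n)) := (F.gc _).monotone_l e1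
        _ = a n := F.ret_emb _ _
    have h0 : h 0 = ⊥ := le_bot_iff.mp (hbot ▸ le_iInf h0le)
    have hn0' : h n0 ≤ ⊥ := by
      have e2 := (F.gc (Nat.zero_le n0)).le_u_l (h n0)
      rwa [hth (Nat.zero_le n0), h0, F.emb_bot] at e2
    exact hn0 (le_bot_iff.mp hn0')
  · intro n heq
    rw [F.auxF_inf_auxF d _ A a hA hdd n, ← F.emb_bot (Nat.zero_le n)] at heq
    have : a n = ⊥ := F.emb_inj _ heq
    exact absurd (this ▸ hdec n) (by simp)
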